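/- Let (qₙ) be a strictly increasing sequence of positive integers and θ ∈ ℝ. Then the set {a ∈ [0,1] : ‖qₙ(a−θ)‖_{ℝ/ℤ} → 0 as n → ∞} has Lebesgue measure zero. -/

import Mathlib

open MeasureTheory Filter Set

/-- Distance from a real number to the nearest integer, `‖x‖_{ℝ/ℤ} = min_{ℓ ∈ ℤ} |x − ℓ|`. -/
noncomputable def distToInt (x : ℝ) : ℝ := ‖(x : UnitAddCircle)‖

lemma distToInt_eq (x : ℝ) : distToInt x = |x - round x| := UnitAddCircle.norm_eq

/-- The set of `a ∈ [0,1]` with `‖Q(a-θ)‖ ≤ ε` has measure at most `6ε` (for `ε ≤ 1/2`). -/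
lemma measure_near_le {Q : ℕ} (hQ : 0 < Q) {θ ε : ℝ} (hε : 0 < ε) (hε2 : ε ≤ 1/2) :
    MeasureTheory.volume
      {a ∈ Set.Icc (0:ℝ) 1 | distToInt ((Q : ℝ) * (a - θ)) ≤ ε}
      ≤ ENNReal.ofReal (6 * ε) := by
  set L : ℤ := ⌈-(Q : ℝ) * θ - ε⌉
  set U : ℤ := ⌊(Q : ℝ) - (Q : ℝ) * θ + ε⌋
  have hQR : (0:ℝ) < Q := by exact_mod_cast hQ
  have hsub : {a ∈ Set.Icc (0:ℝ) 1 | distToInt ((Q : ℝ) * (a - θ)) ≤ ε}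
      ⊆ ⋃ ℓ ∈ Finset.Icc L U,
        Set.Icc (θ + ((ℓ : ℝ) - ε) / Q) (θ + ((ℓ : ℝ) + ε) / Q) := by
    rintro a ⟨⟨ha0, ha1⟩, hd⟩
    rw [distToInt_eq] at hd
    set x : ℝ := (Q : ℝ) * (a - θ)
    set ℓ : ℤ := round x
    have habs := abs_le.mp hd
    have hxlo : -(Q : ℝ) * θ ≤ x := by
      have : (Q : ℝ) * (0 - θ) ≤ x := by
        apply mul_le_mul_of_nonneg_left _ hQR.le
        linarith
      linarith [this]
    have hxhi : x ≤ (Q : ℝ) - (Q : ℝ) * θ := by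
      have : x ≤ (Q : ℝ) * (1 - θ) := by
        apply mul_le_mul_of_nonneg_left _ hQR.le
        linarith
      linarith [this]
    refine Set.mem_iUnion₂.mpr ⟨ℓ, ?_, ?_⟩
    · rw [Finset.mem_Icc]
      constructor
      · have : -(Q : ℝ) * θ - ε ≤ (ℓ : ℝ) := by linarith [habs.2]
        exact Int.ceil_le.mpr this
      · have : (ℓ : ℝ) ≤ (Q : ℝ) - (Q : ℝ) * θ + ε := by linarith [habs.1]
        exact Int.le_floor.mpr this
    · constructor
      · have h1 : (ℓ : ℝ) - ε ≤ x := by linarith [habs.1]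
        have : ((ℓ : ℝ) - ε) / Q ≤ a - θ := by
          rw [div_le_iff₀ hQR]
          calc (ℓ : ℝ) - ε ≤ x := h1
          _ = (a - θ) * Q := by ring
        linarith [this]
      · have h2 : x ≤ (ℓ : ℝ) + ε := by linarith [habs.2]
        have : a - θ ≤ ((ℓ : ℝ) + ε) / Q := by
          rw [le_div_iff₀ hQR]
          calc (a - θ) * Q = x := by ring
          _ ≤ (ℓ : ℝ) + ε := h2
        linarith [this]
  calc MeasureTheory.volume {a ∈ Set.Icc (0:ℝ) 1 | distToInt ((Q : ℝ) * (a - θ)) ≤ ε}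
      ≤ MeasureTheory.volume (⋃ ℓ ∈ Finset.Icc L U,
          Set.Icc (θ + ((ℓ : ℝ) - ε) / Q) (θ + ((ℓ : ℝ) + ε) / Q)) := measure_mono hsub
    _ ≤ ∑ ℓ ∈ Finset.Icc L U, MeasureTheory.volume
          (Set.Icc (θ + ((ℓ : ℝ) - ε) / Q) (θ + ((ℓ : ℝ) + ε) / Q)) :=
        measure_biUnion_finset_le _ _
    _ = ∑ ℓ ∈ Finset.Icc L U, ENNReal.ofReal (2 * ε / Q) := by
        apply Finset.sum_congr rfl
        intro ℓ _
        rw [Real.volume_Icc]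
        congr 1
        field_simp
        ring
    _ = (Finset.Icc L U).card • ENNReal.ofReal (2 * ε / Q) := by
        rw [Finset.sum_const]
    _ ≤ (3 * Q) • ENNReal.ofReal (2 * ε / Q) := by
        have hcard : (Finset.Icc L U).card ≤ 3 * Q := by
          rw [Int.card_Icc]
          have hUL : U - L + 1 ≤ 3 * Q := by
            have h1 : (L : ℝ) ≥ -(Q : ℝ) * θ - ε := Int.le_ceil _
            have h2 : (U : ℝ) ≤ (Q : ℝ) - (Q : ℝ) * θ + ε := Int.floor_le _
            have : (U : ℝ) - L + 1 ≤ (Q : ℝ) + 2 * ε + 1 := by linarith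
            have h3 : (U : ℝ) - L + 1 ≤ 3 * Q := by
              have : (1:ℝ) ≤ Q := by exact_mod_cast hQ
              linarith
            exact_mod_cast h3
          calc (U + 1 - L).toNat ≤ (3 * Q : ℤ).toNat := by
                apply Int.toNat_le_toNat; omega
            _ = 3 * Q := by omega
        rw [nsmul_eq_mul, nsmul_eq_mul]
        exact mul_le_mul_of_nonneg_right (by exact_mod_cast hcard) zero_le
    _ = ENNReal.ofReal ((3 * Q : ℕ) * (2 * ε / Q)) := by
        rw [nsmul_eq_mul, ← ENNReal.ofReal_natCast, ← ENNReal.ofReal_mul (by positivity)]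
    _ = ENNReal.ofReal (6 * ε) := by
        congr 1
        push_cast
        field_simp
        ring
    _ ≤ ENNReal.ofReal (6 * ε) := le_refl _

/-- If `(qₙ)` is a strictly increasing sequence of positive integers and `θ ∈ ℝ`, then
`{a ∈ [0,1] : ‖qₙ(a − θ)‖_{ℝ/ℤ} → 0}` has Lebesgue measure zero. -/
theorem stmt4 (q : ℕ → ℕ) (hmono : StrictMono q) (hpos : ∀ n, 0 < q n) (θ : ℝ) :
    MeasureTheory.volume
      {a ∈ Set.Icc (0:ℝ) 1 |
        Filter.Tendsto (fun n => distToInt (q n * (a - θ))) Filter.atTop (nhds 0)} = 0 := by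
  set A := {a ∈ Set.Icc (0:ℝ) 1 |
      Filter.Tendsto (fun n => distToInt (q n * (a - θ))) Filter.atTop (nhds 0)} with hA
  have key : ∀ ε : ℝ, 0 < ε → ε ≤ 1/2 →
      MeasureTheory.volume A ≤ ENNReal.ofReal (6 * ε) := by
    intro ε hε hε2
    set S : ℕ → Set ℝ := fun N =>
      {a ∈ Set.Icc (0:ℝ) 1 | ∀ n, N ≤ n → distToInt (q n * (a - θ)) ≤ ε} with hS
    have hmonoS : Monotone S := by
      intro N M hNM a ⟨h1, h2⟩
      exact ⟨h1, fun n hn => h2 n (le_trans hNM hn)⟩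
    have hAsub : A ⊆ ⋃ N, S N := by
      intro a ⟨ha, htend⟩
      have := (htend.eventually_lt_const hε)
      rw [eventually_atTop] at this
      obtain ⟨N, hN⟩ := this
      exact Set.mem_iUnion.mpr ⟨N, ha, fun n hn => (hN n hn).le⟩
    calc MeasureTheory.volume A ≤ MeasureTheory.volume (⋃ N, S N) := measure_mono hAsub
      _ = ⨆ N, MeasureTheory.volume (S N) := hmonoS.measure_iUnion
      _ ≤ ENNReal.ofReal (6 * ε) := by
          apply iSup_le
          intro N
          have hsub : S N ⊆ {a ∈ Set.Icc (0:ℝ) 1 |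
              distToInt ((q N : ℝ) * (a - θ)) ≤ ε} := by
            intro a ⟨h1, h2⟩
            exact ⟨h1, h2 N le_rfl⟩
          exact le_trans (measure_mono hsub) (measure_near_le (hpos N) hε hε2)
  refine le_antisymm ?_ zero_le
  refine ENNReal.le_of_forall_pos_le_add ?_
  intro δ hδ _
  rw [zero_add]
  set ε : ℝ := min ((δ : ℝ) / 6) (1/2) with hεdef
  have hε : 0 < ε := lt_min (by positivity) (by norm_num)
  have hε2 : ε ≤ 1/2 := min_le_right _ _
  calc MeasureTheory.volume A ≤ ENNReal.ofReal (6 * ε) := key ε hε hε2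
    _ ≤ ENNReal.ofReal (δ : ℝ) := by
        apply ENNReal.ofReal_le_ofReal
        have : ε ≤ (δ : ℝ) / 6 := min_le_left _ _
        linarith
    _ = (δ : ENNReal) := ENNReal.ofReal_coe_nnreal
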